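/- arXiv:0804.3408 — 2 statements merged into one kernel-verified Lean document; each statement's English description precedes it below -/
import Mathlib

section
/- Let u : R^{2n} → R be C^3 with bounded first derivatives along the vector fields X^ε_{i,u}, and suppose u solves L_ε u = Σ_{i=1}^{2n} X^ε_{i,u}( X^ε_{i,u}u / √(1 + |∇^ε_u u|²) ) = 0 in an open set Ω. Then ω = ∂_{2n}u satisfies the linear equation Σ_{i,j} (X^ε_{i,u})^* ( (a_{ij}(∇^ε_u u)/√(1+|∇^ε_u u|²)) (X^ε_{j,u})^* ω ) = 0 in Ω, where a_{ij}(p) = δ_{ij} - p_i p_j/(1+|p|²). -/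
open scoped BigOperators

/-- Partial derivative `∂_i f (x)` on `ℝ^N`. -/
noncomputable def pd {N : ℕ} (i : Fin N) (f : EuclideanSpace ℝ (Fin N) → ℝ)
    (x : EuclideanSpace ℝ (Fin N)) : ℝ :=
  fderiv ℝ f x (EuclideanSpace.single i 1)

/-- The vector fields `X^ε_{i,u}` of the Riemannian approximation on the
intrinsic-graph domain `ℝ^{2n}` (0-based indices: `X_i = ∂_i` for `i < n-1`,
`X_i = ∂_i - x_{i-(n-1)}∂_{2n}` for `n-1 ≤ i < 2n-2`,
`X_{2n-2} = ∂_{2n-2} + u∂_{2n}`, `X_{2n-1} = ε∂_{2n}`). -/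
noncomputable def Xop (n : ℕ) (hn : 1 ≤ n) (ε : ℝ)
    (u : EuclideanSpace ℝ (Fin (2*n)) → ℝ) (i : Fin (2*n))
    (f : EuclideanSpace ℝ (Fin (2*n)) → ℝ) (x : EuclideanSpace ℝ (Fin (2*n))) : ℝ :=
  if (i : ℕ) < n - 1 then pd i f x
  else if (i : ℕ) < 2*n - 2 then
    pd i f x - x ⟨(i : ℕ) - (n - 1), by have := i.isLt; omega⟩ * pd ⟨2*n - 1, by omega⟩ f x
  else if (i : ℕ) = 2*n - 2 then
    pd i f x + u x * pd ⟨2*n - 1, by omega⟩ f x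
  else ε * pd ⟨2*n - 1, by omega⟩ f x

/-- The squared length `|∇^ε_u f|²` of the intrinsic gradient. -/
noncomputable def gradSq (n : ℕ) (hn : 1 ≤ n) (ε : ℝ)
    (u f : EuclideanSpace ℝ (Fin (2*n)) → ℝ) (x : EuclideanSpace ℝ (Fin (2*n))) : ℝ :=
  ∑ i : Fin (2*n), (Xop n hn ε u i f x) ^ 2

/-- `a_{ij}(p) = δ_{ij} - p_i p_j/(1+|p|²)` for `p : Fin m → ℝ`. -/
noncomputable def aCoef {m : ℕ} (p : Fin m → ℝ) (i j : Fin m) : ℝ :=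
  (if i = j then 1 else 0) - p i * p j / (1 + ∑ k, (p k) ^ 2)

/-- The approximating minimal surface operator
`L_ε u = Σ_i X^ε_{i,u}( X^ε_{i,u}u / √(1+|∇^ε_u u|²) )`. -/
noncomputable def Lop (n : ℕ) (hn : 1 ≤ n) (ε : ℝ)
    (u : EuclideanSpace ℝ (Fin (2*n)) → ℝ) (x : EuclideanSpace ℝ (Fin (2*n))) : ℝ :=
  ∑ i : Fin (2*n),
    Xop n hn ε u i
      (fun y => Xop n hn ε u i u y / Real.sqrt (1 + gradSq n hn ε u u y)) x

/-- The formal adjoint `(X^ε_{i,u})^* = -X^ε_{i,u} - δ_{i,2n-1}(∂_{2n}u)`. -/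
noncomputable def XopStar (n : ℕ) (hn : 1 ≤ n) (ε : ℝ)
    (u : EuclideanSpace ℝ (Fin (2*n)) → ℝ) (i : Fin (2*n))
    (f : EuclideanSpace ℝ (Fin (2*n)) → ℝ) (x : EuclideanSpace ℝ (Fin (2*n))) : ℝ :=
  -(Xop n hn ε u i f x)
    - (if (i : ℕ) = 2*n - 2 then pd ⟨2*n - 1, by omega⟩ u x * f x else 0)

section pdlemmas

variable {N : ℕ} {i j : Fin N} {f g : EuclideanSpace ℝ (Fin N) → ℝ}
  {x : EuclideanSpace ℝ (Fin N)}

lemma pd_add (hf : DifferentiableAt ℝ f x) (hg : DifferentiableAt ℝ g x) :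
    pd i (fun y => f y + g y) x = pd i f x + pd i g x := by
  simp [pd, fderiv_fun_add hf hg]

lemma pd_neg : pd i (fun y => -f y) x = -pd i f x := by
  simp [pd, fderiv_neg]

lemma pd_sub (hf : DifferentiableAt ℝ f x) (hg : DifferentiableAt ℝ g x) :
    pd i (fun y => f y - g y) x = pd i f x - pd i g x := by
  simp [pd, fderiv_fun_sub hf hg]

lemma pd_mul (hf : DifferentiableAt ℝ f x) (hg : DifferentiableAt ℝ g x) :
    pd i (fun y => f y * g y) x = f x * pd i g x + g x * pd i f x := by
  simp [pd, fderiv_fun_mul hf hg]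

lemma pd_const (c : ℝ) : pd i (fun _ => c) x = 0 := by
  simp [pd]

lemma pd_const_mul (hf : DifferentiableAt ℝ f x) (c : ℝ) :
    pd i (fun y => c * f y) x = c * pd i f x := by
  simp [pd, fderiv_const_mul hf]

lemma pd_sum {s : Finset (Fin N)} {A : Fin N → EuclideanSpace ℝ (Fin N) → ℝ}
    (h : ∀ j ∈ s, DifferentiableAt ℝ (A j) x) :
    pd i (fun y => ∑ j ∈ s, A j y) x = ∑ j ∈ s, pd i (A j) x := by
  simp [pd, fderiv_fun_sum h]

lemma pd_sqrt (hf : DifferentiableAt ℝ f x) (hx : f x ≠ 0) :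
    pd i (fun y => Real.sqrt (f y)) x = pd i f x / (2 * Real.sqrt (f x)) := by
  have h := (Real.hasDerivAt_sqrt hx).comp_hasFDerivAt x hf.hasFDerivAt
  have heq : (fun y => Real.sqrt (f y)) = (fun t => Real.sqrt t) ∘ f := rfl
  rw [pd, heq, h.fderiv]
  simp [pd, div_eq_inv_mul]

lemma pd_inv (hg : DifferentiableAt ℝ g x) (hx : g x ≠ 0) :
    pd i (fun y => (g y)⁻¹) x = -pd i g x / g x ^ 2 := by
  have h := (hasDerivAt_inv hx).comp_hasFDerivAt x hg.hasFDerivAt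
  have heq : (fun y => (g y)⁻¹) = (fun t : ℝ => t⁻¹) ∘ g := rfl
  rw [pd, heq, h.fderiv]
  simp [pd, div_eq_inv_mul]

lemma pd_div (hf : DifferentiableAt ℝ f x) (hg : DifferentiableAt ℝ g x) (hx : g x ≠ 0) :
    pd i (fun y => f y / g y) x
      = (pd i f x * g x - f x * pd i g x) / g x ^ 2 := by
  have heq : (fun y => f y / g y) = fun y => f y * (g y)⁻¹ := by
    funext y; rw [div_eq_mul_inv]
  rw [heq, pd_mul hf (hg.fun_inv hx), pd_inv hg hx]
  field_simp
  ring

lemma pd_coord (k : Fin N) : pd i (fun y => y k) x = if k = i then 1 else 0 := by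
  have : (fun y : EuclideanSpace ℝ (Fin N) => y k) = EuclideanSpace.proj (𝕜 := ℝ) k := rfl
  rw [pd, this, ContinuousLinearMap.fderiv]
  simp [EuclideanSpace.single_apply]

lemma pd_congr_nhds (h : f =ᶠ[nhds x] g) : pd i f x = pd i g x := by
  rw [pd, pd, h.fderiv_eq]

lemma contDiff_pd {k : ℕ} (hf : ContDiff ℝ (k + 1) f) :
    ContDiff ℝ k (fun y => pd j f y) := by
  have h1 : ContDiff ℝ k (fderiv ℝ f) := hf.fderiv_right (by norm_cast)
  exact h1.clm_apply contDiff_const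

lemma pd_comm (hf : ContDiffAt ℝ 2 f x) :
    pd i (fun y => pd j f y) x = pd j (fun y => pd i f y) x := by
  have hsymm := hf.isSymmSndFDerivAt (by norm_num)
  have hdf : DifferentiableAt ℝ (fderiv ℝ f) x :=
    (hf.fderiv_right (m := 1) (by norm_num)).differentiableAt (by norm_num)
  have key : ∀ a b : Fin N,
      pd a (fun y => pd b f y) x
        = fderiv ℝ (fderiv ℝ f) x (EuclideanSpace.single a 1) (EuclideanSpace.single b 1) := by
    intro a b
    have : pd a (fun y => pd b f y) x
        = fderiv ℝ (fun y => (fderiv ℝ f y) (EuclideanSpace.single b 1)) x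
            (EuclideanSpace.single a 1) := rfl
    rw [this, fderiv_clm_apply hdf (differentiableAt_const _)]
    simp
  rw [key i j, key j i, hsymm]

end pdlemmas

namespace Stmt8

variable {n : ℕ}

/-- The coefficient of `∂_{2n}` in `X_i`, minus-the-`∂_i`-part; uniform form. -/
noncomputable def cf (n : ℕ) (hn : 1 ≤ n) (ε : ℝ)
    (u : EuclideanSpace ℝ (Fin (2*n)) → ℝ) (i : Fin (2*n))
    (x : EuclideanSpace ℝ (Fin (2*n))) : ℝ :=
  if (i : ℕ) < n - 1 then 0
  else if (i : ℕ) < 2*n - 2 then -(x ⟨(i : ℕ) - (n - 1), by have := i.isLt; omega⟩)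
  else if (i : ℕ) = 2*n - 2 then u x
  else ε - 1

def dd (n : ℕ) (hn : 1 ≤ n) : Fin (2*n) := ⟨2*n - 1, by omega⟩

lemma Xop_eq (hn : 1 ≤ n) (ε : ℝ) (u f : EuclideanSpace ℝ (Fin (2*n)) → ℝ)
    (i : Fin (2*n)) (x : EuclideanSpace ℝ (Fin (2*n))) :
    Xop n hn ε u i f x = pd i f x + cf n hn ε u i x * pd (dd n hn) f x := by
  unfold Xop cf dd
  split_ifs with h1 h2 h3
  · ring
  · ring
  · ring
  · have hi : i = (⟨2*n - 1, by omega⟩ : Fin (2*n)) := Fin.ext (by simp; omega)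
    rw [hi]; ring

lemma cf_contDiff (hn : 1 ≤ n) (ε : ℝ) {u : EuclideanSpace ℝ (Fin (2*n)) → ℝ}
    (hu : ContDiff ℝ 3 u) (i : Fin (2*n)) : ContDiff ℝ 2 (cf n hn ε u i) := by
  unfold cf
  split_ifs with h1 h2 h3
  · exact contDiff_const
  · have h : ContDiff ℝ 2 (fun x : EuclideanSpace ℝ (Fin (2*n)) =>
        x ⟨(i : ℕ) - (n - 1), by have := i.isLt; omega⟩) :=
      ContinuousLinearMap.contDiff (EuclideanSpace.proj (𝕜 := ℝ) (ι := Fin (2*n))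
        ⟨(i : ℕ) - (n - 1), by have := i.isLt; omega⟩)
    exact h.neg
  · exact hu.of_le (by norm_num)
  · exact contDiff_const

lemma cf_pd_dd (hn : 1 ≤ n) (ε : ℝ) (u : EuclideanSpace ℝ (Fin (2*n)) → ℝ)
    (i : Fin (2*n)) (x : EuclideanSpace ℝ (Fin (2*n))) :
    pd (dd n hn) (cf n hn ε u i) x
      = if (i : ℕ) = 2*n - 2 then pd (dd n hn) u x else 0 := by
  have hlt := i.isLt
  by_cases h1 : (i : ℕ) < n - 1
  · rw [if_neg (by omega : ¬ (i : ℕ) = 2*n - 2)]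
    have hc : cf n hn ε u i = fun _ => (0 : ℝ) := by funext y; simp [cf, h1]
    rw [hc]; exact pd_const 0
  · by_cases h2 : (i : ℕ) < 2*n - 2
    · rw [if_neg (by omega : ¬ (i : ℕ) = 2*n - 2)]
      have hc : cf n hn ε u i
          = fun y : EuclideanSpace ℝ (Fin (2*n)) =>
              -(y ⟨(i : ℕ) - (n - 1), by omega⟩) := by
        funext y; simp [cf, h1, h2]
      rw [hc, pd_neg, pd_coord,
        if_neg (by simp only [dd, Fin.ext_iff]; omega), neg_zero]
    · by_cases h3 : (i : ℕ) = 2*n - 2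
      · rw [if_pos h3]
        have hc : cf n hn ε u i = u := by
          funext y; simp only [cf, if_neg h1, if_neg h2, if_pos h3]
        rw [hc]
      · rw [if_neg h3]
        have hc : cf n hn ε u i = fun _ => ε - 1 := by
          funext y; simp only [cf, if_neg h1, if_neg h2, if_neg h3]
        rw [hc]; exact pd_const _



noncomputable def Vf (n : ℕ) (hn : 1 ≤ n) (ε : ℝ)
    (u : EuclideanSpace ℝ (Fin (2*n)) → ℝ) (i : Fin (2*n))
    (y : EuclideanSpace ℝ (Fin (2*n))) : ℝ :=
  Xop n hn ε u i u y / Real.sqrt (1 + gradSq n hn ε u u y)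

lemma cd21 {u : EuclideanSpace ℝ (Fin (2*n)) → ℝ} (hu : ContDiff ℝ 3 u) :
    ContDiff ℝ ((2:ℕ)+1) u := by exact_mod_cast hu

lemma contDiff_P (hn : 1 ≤ n) (ε : ℝ) {u : EuclideanSpace ℝ (Fin (2*n)) → ℝ}
    (hu : ContDiff ℝ 3 u) (i : Fin (2*n)) :
    ContDiff ℝ 2 (fun y => Xop n hn ε u i u y) := by
  have h : (fun y => Xop n hn ε u i u y)
      = fun y => pd i u y + cf n hn ε u i y * pd (dd n hn) u y := by
    funext y; rw [Xop_eq]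
  rw [h]
  exact (contDiff_pd (cd21 hu)).add
    ((cf_contDiff hn ε hu i).mul (contDiff_pd (cd21 hu)))

lemma W_pos (hn : 1 ≤ n) (ε : ℝ) (u : EuclideanSpace ℝ (Fin (2*n)) → ℝ)
    (y : EuclideanSpace ℝ (Fin (2*n))) : 0 < 1 + gradSq n hn ε u u y := by
  have : 0 ≤ gradSq n hn ε u u y :=
    Finset.sum_nonneg (fun k _ => sq_nonneg _)
  linarith

lemma contDiff_W (hn : 1 ≤ n) (ε : ℝ) {u : EuclideanSpace ℝ (Fin (2*n)) → ℝ}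
    (hu : ContDiff ℝ 3 u) :
    ContDiff ℝ 2 (fun y => 1 + gradSq n hn ε u u y) := by
  have h : (fun y => 1 + gradSq n hn ε u u y)
      = fun y => (1:ℝ) + ∑ k : Fin (2*n), (Xop n hn ε u k u y)^2 := rfl
  rw [h]
  exact contDiff_const.add
    (ContDiff.sum (fun k _ => (contDiff_P hn ε hu k).pow 2))

lemma S_pos (hn : 1 ≤ n) (ε : ℝ) (u : EuclideanSpace ℝ (Fin (2*n)) → ℝ)
    (y : EuclideanSpace ℝ (Fin (2*n))) :
    0 < Real.sqrt (1 + gradSq n hn ε u u y) :=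
  Real.sqrt_pos.2 (W_pos hn ε u y)

lemma contDiff_S (hn : 1 ≤ n) (ε : ℝ) {u : EuclideanSpace ℝ (Fin (2*n)) → ℝ}
    (hu : ContDiff ℝ 3 u) :
    ContDiff ℝ 2 (fun y => Real.sqrt (1 + gradSq n hn ε u u y)) :=
  (contDiff_W hn ε hu).sqrt (fun y => (W_pos hn ε u y).ne')

lemma contDiff_V (hn : 1 ≤ n) (ε : ℝ) {u : EuclideanSpace ℝ (Fin (2*n)) → ℝ}
    (hu : ContDiff ℝ 3 u) (i : Fin (2*n)) : ContDiff ℝ 2 (Vf n hn ε u i) :=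
  (contDiff_P hn ε hu i).div (contDiff_S hn ε hu)
    (fun y => (S_pos hn ε u y).ne')

lemma contDiff_w (hn : 1 ≤ n) {u : EuclideanSpace ℝ (Fin (2*n)) → ℝ}
    (hu : ContDiff ℝ 3 u) : ContDiff ℝ 2 (fun y => pd (dd n hn) u y) :=
  contDiff_pd (cd21 hu)

/-- `∂_{2n}(X_j u) = X_j(∂_{2n} u) + δ_{j,2n-2} (∂_{2n}u)²`. -/
lemma pd_dd_P (hn : 1 ≤ n) (ε : ℝ) {u : EuclideanSpace ℝ (Fin (2*n)) → ℝ}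
    (hu : ContDiff ℝ 3 u) (j : Fin (2*n)) (y : EuclideanSpace ℝ (Fin (2*n))) :
    pd (dd n hn) (fun z => Xop n hn ε u j u z) y
      = Xop n hn ε u j (fun z => pd (dd n hn) u z) y
        + (if (j : ℕ) = 2*n - 2 then (pd (dd n hn) u y)^2 else 0) := by
  have hXf : (fun z => Xop n hn ε u j u z)
      = fun z => pd j u z + cf n hn ε u j z * pd (dd n hn) u z := by
    funext z; rw [Xop_eq]
  have hd1 : DifferentiableAt ℝ (fun z => pd j u z) y :=
    ((contDiff_pd (j := j) (cd21 hu)).differentiable (by norm_num)).differentiableAt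
  have hd2 : DifferentiableAt ℝ (cf n hn ε u j) y :=
    ((cf_contDiff hn ε hu j).differentiable (by norm_num)).differentiableAt
  have hd3 : DifferentiableAt ℝ (fun z => pd (dd n hn) u z) y :=
    ((contDiff_w hn hu).differentiable (by norm_num)).differentiableAt
  rw [hXf, pd_add hd1 (hd2.fun_mul hd3), pd_mul hd2 hd3,
    pd_comm (hu.contDiffAt.of_le (by norm_num)), cf_pd_dd,
    Xop_eq]
  split_ifs with h
  · ring
  · ring


lemma XopStar_eq (hn : 1 ≤ n) (ε : ℝ) (u f : EuclideanSpace ℝ (Fin (2*n)) → ℝ)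
    (j : Fin (2*n)) (x : EuclideanSpace ℝ (Fin (2*n))) :
    XopStar n hn ε u j f x
      = -(Xop n hn ε u j f x)
        - (if (j : ℕ) = 2*n - 2 then pd (dd n hn) u x * f x else 0) := rfl

/-- `∂_{2n} W = Σ_k 2 p_k ∂_{2n} p_k`. -/
lemma pd_dd_W (hn : 1 ≤ n) (ε : ℝ) {u : EuclideanSpace ℝ (Fin (2*n)) → ℝ}
    (hu : ContDiff ℝ 3 u) (y : EuclideanSpace ℝ (Fin (2*n))) :
    pd (dd n hn) (fun z => 1 + gradSq n hn ε u u z) y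
      = ∑ k : Fin (2*n), 2 * Xop n hn ε u k u y
          * pd (dd n hn) (fun z => Xop n hn ε u k u z) y := by
  have hP : ∀ k : Fin (2*n), DifferentiableAt ℝ (fun z => Xop n hn ε u k u z) y :=
    fun k => ((contDiff_P hn ε hu k).differentiable (by norm_num)).differentiableAt
  have h : (fun z => 1 + gradSq n hn ε u u z)
      = fun z => (1:ℝ) + ∑ k : Fin (2*n), (Xop n hn ε u k u z)^2 := rfl
  have hsq : ∀ k : Fin (2*n), (fun z => (Xop n hn ε u k u z)^2)
      = fun z => Xop n hn ε u k u z * Xop n hn ε u k u z := by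
    intro k; funext z; ring
  have hG : DifferentiableAt ℝ
      (fun z => ∑ k : Fin (2*n), (Xop n hn ε u k u z)^2) y := by
    apply DifferentiableAt.fun_sum
    intro k _
    rw [hsq k]
    exact (hP k).mul (hP k)
  rw [h, pd_add (differentiableAt_const 1) hG, pd_const,
    pd_sum (fun k _ => by rw [hsq k]; exact (hP k).mul (hP k))]
  rw [zero_add]
  apply Finset.sum_congr rfl
  intro k _
  rw [hsq k, pd_mul (hP k) (hP k)]
  ring

/-- Pure algebra behind claim 1. -/
lemma alg {m : ℕ} (i : Fin m) (p q : Fin m → ℝ) (s W : ℝ) (hs : 0 < s)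
    (hW : W = s^2) :
    ∑ j : Fin m, ((if i = j then 1 else 0) - p i * p j / W) / s * (-(q j))
      = -((q i * s - p i * ((∑ k : Fin m, 2 * p k * q k) / (2 * s))) / s^2) := by
  subst hW
  calc ∑ j : Fin m, ((if i = j then 1 else 0) - p i * p j / s^2) / s * (-(q j))
      = ∑ j : Fin m,
          ((if i = j then -(q j) / s else 0) + p i * p j * q j / s^3) := by
        refine Finset.sum_congr rfl (fun j _ => ?_)
        split_ifs with h
        · ring
        · ring
    _ = -(q i) / s + ∑ j : Fin m, p i * p j * q j / s^3 := by
        rw [Finset.sum_add_distrib, Finset.sum_ite_eq, if_pos (Finset.mem_univ i)]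
    _ = -(q i) / s + (p i / s^3) * ∑ j : Fin m, p j * q j := by
        rw [Finset.mul_sum]
        congr 1
        exact Finset.sum_congr rfl (fun j _ => by ring)
    _ = -((q i * s - p i * ((∑ k : Fin m, 2 * p k * q k) / (2 * s))) / s^2) := by
        have h2 : ∑ k : Fin m, 2 * p k * q k = 2 * ∑ k : Fin m, p k * q k := by
          rw [Finset.mul_sum]
          exact Finset.sum_congr rfl (fun k _ => by ring)
        rw [h2]
        field_simp
        ring

/-- Claim 1: the inner sum over `j` equals `-∂_{2n}(v_i)`. -/
lemma claim1 (hn : 1 ≤ n) (ε : ℝ) {u : EuclideanSpace ℝ (Fin (2*n)) → ℝ}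
    (hu : ContDiff ℝ 3 u) (i : Fin (2*n)) (y : EuclideanSpace ℝ (Fin (2*n))) :
    ∑ j : Fin (2*n),
        aCoef (fun k => Xop n hn ε u k u y) i j
            / Real.sqrt (1 + gradSq n hn ε u u y)
          * XopStar n hn ε u j (fun z => pd (dd n hn) u z) y
      = -(pd (dd n hn) (Vf n hn ε u i) y) := by
  have hP : ∀ k : Fin (2*n), DifferentiableAt ℝ (fun z => Xop n hn ε u k u z) y :=
    fun k => ((contDiff_P hn ε hu k).differentiable (by norm_num)).differentiableAt
  have hWd : DifferentiableAt ℝ (fun z => 1 + gradSq n hn ε u u z) y :=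
    ((contDiff_W hn ε hu).differentiable (by norm_num)).differentiableAt
  have hSd : DifferentiableAt ℝ
      (fun z => Real.sqrt (1 + gradSq n hn ε u u z)) y :=
    ((contDiff_S hn ε hu).differentiable (by norm_num)).differentiableAt
  have hspos : 0 < Real.sqrt (1 + gradSq n hn ε u u y) := S_pos hn ε u y
  have hWeq : 1 + gradSq n hn ε u u y
      = (Real.sqrt (1 + gradSq n hn ε u u y))^2 :=
    (Real.sq_sqrt (W_pos hn ε u y).le).symm
  -- Step B : `XopStar j ω y = -(∂_{2n} p_j)`
  have hstar : ∀ j : Fin (2*n),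
      XopStar n hn ε u j (fun z => pd (dd n hn) u z) y
        = -(pd (dd n hn) (fun z => Xop n hn ε u j u z) y) := by
    intro j
    rw [XopStar_eq, pd_dd_P hn ε hu j y]
    split_ifs with h
    · ring
    · ring
  -- Step A : compute `pd dd (Vf i) y`
  have hVeq : (Vf n hn ε u i)
      = fun z => Xop n hn ε u i u z / Real.sqrt (1 + gradSq n hn ε u u z) := rfl
  have hpdV : pd (dd n hn) (Vf n hn ε u i) y
      = (pd (dd n hn) (fun z => Xop n hn ε u i u z) y
            * Real.sqrt (1 + gradSq n hn ε u u y)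
          - Xop n hn ε u i u y
            * ((∑ k : Fin (2*n), 2 * Xop n hn ε u k u y
                * pd (dd n hn) (fun z => Xop n hn ε u k u z) y)
              / (2 * Real.sqrt (1 + gradSq n hn ε u u y))))
        / (Real.sqrt (1 + gradSq n hn ε u u y))^2 := by
    rw [hVeq, pd_div (hP i) hSd hspos.ne',
      pd_sqrt hWd (W_pos hn ε u y).ne', pd_dd_W hn ε hu y]
  rw [hpdV]
  have halg := alg i (fun k => Xop n hn ε u k u y)
    (fun k => pd (dd n hn) (fun z => Xop n hn ε u k u z) y)
    (Real.sqrt (1 + gradSq n hn ε u u y))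
    (1 + gradSq n hn ε u u y) hspos hWeq
  refine Eq.trans (Finset.sum_congr rfl fun j _ => ?_) halg
  rw [hstar j]
  simp only [aCoef, gradSq]


lemma cd11 {f : EuclideanSpace ℝ (Fin (2*n)) → ℝ} (h : ContDiff ℝ 2 f) :
    ContDiff ℝ ((1:ℕ)+1) f := by exact_mod_cast h

lemma Xop_neg (hn : 1 ≤ n) (ε : ℝ) (u g : EuclideanSpace ℝ (Fin (2*n)) → ℝ)
    (i : Fin (2*n)) (x : EuclideanSpace ℝ (Fin (2*n))) :
    Xop n hn ε u i (fun y => -(g y)) x = -(Xop n hn ε u i g x) := by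
  rw [Xop_eq, Xop_eq, pd_neg, pd_neg]; ring

lemma Xop_sum (hn : 1 ≤ n) (ε : ℝ) (u : EuclideanSpace ℝ (Fin (2*n)) → ℝ)
    (i : Fin (2*n)) {A : Fin (2*n) → EuclideanSpace ℝ (Fin (2*n)) → ℝ}
    {x : EuclideanSpace ℝ (Fin (2*n))}
    (h : ∀ j, DifferentiableAt ℝ (A j) x) :
    Xop n hn ε u i (fun y => ∑ j : Fin (2*n), A j y) x
      = ∑ j : Fin (2*n), Xop n hn ε u i (A j) x := by
  rw [Xop_eq, pd_sum (fun j _ => h j), pd_sum (fun j _ => h j), Finset.mul_sum,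
    ← Finset.sum_add_distrib]
  exact Finset.sum_congr rfl (fun j _ => (Xop_eq hn ε u (A j) i x).symm)

lemma XopStar_sum (hn : 1 ≤ n) (ε : ℝ) (u : EuclideanSpace ℝ (Fin (2*n)) → ℝ)
    (i : Fin (2*n)) {A : Fin (2*n) → EuclideanSpace ℝ (Fin (2*n)) → ℝ}
    {x : EuclideanSpace ℝ (Fin (2*n))}
    (h : ∀ j, DifferentiableAt ℝ (A j) x) :
    ∑ j : Fin (2*n), XopStar n hn ε u i (A j) x
      = XopStar n hn ε u i (fun y => ∑ j : Fin (2*n), A j y) x := by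
  have hX : ∀ j : Fin (2*n), XopStar n hn ε u i (A j) x
      = -(Xop n hn ε u i (A j) x)
        - (if (i : ℕ) = 2*n - 2 then pd (dd n hn) u x * A j x else 0) :=
    fun j => XopStar_eq hn ε u (A j) i x
  rw [Finset.sum_congr rfl (fun j _ => hX j), XopStar_eq, Xop_sum hn ε u i h]
  split_ifs with hc
  · rw [Finset.sum_sub_distrib, Finset.sum_neg_distrib, Finset.mul_sum]
  · simp [Finset.sum_neg_distrib]

lemma contDiff_inner (hn : 1 ≤ n) (ε : ℝ) {u : EuclideanSpace ℝ (Fin (2*n)) → ℝ}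
    (hu : ContDiff ℝ 3 u) (i j : Fin (2*n)) :
    ContDiff ℝ 1 (fun y =>
      aCoef (fun k => Xop n hn ε u k u y) i j
          / Real.sqrt (1 + gradSq n hn ε u u y)
        * XopStar n hn ε u j (fun z => pd (dd n hn) u z) y) := by
  have hA : ContDiff ℝ 1 (fun y => aCoef (fun k => Xop n hn ε u k u y) i j
      / Real.sqrt (1 + gradSq n hn ε u u y)) := by
    have h : (fun y => aCoef (fun k => Xop n hn ε u k u y) i j
          / Real.sqrt (1 + gradSq n hn ε u u y))
        = fun y => ((if i = j then (1:ℝ) else 0)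
            - Xop n hn ε u i u y * Xop n hn ε u j u y / (1 + gradSq n hn ε u u y))
            / Real.sqrt (1 + gradSq n hn ε u u y) := rfl
    rw [h]
    refine ContDiff.div ?_ ((contDiff_S hn ε hu).of_le (by norm_num))
      (fun y => (S_pos hn ε u y).ne')
    refine ContDiff.sub contDiff_const ?_
    exact (((contDiff_P hn ε hu i).mul (contDiff_P hn ε hu j)).div
      (contDiff_W hn ε hu) (fun y => (W_pos hn ε u y).ne')).of_le (by norm_num)
  have hw2 : ContDiff ℝ ((1:ℕ)+1) (fun z => pd (dd n hn) u z) := cd11 (contDiff_w hn hu)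
  have hStar : ContDiff ℝ 1
      (fun y => XopStar n hn ε u j (fun z => pd (dd n hn) u z) y) := by
    have h : (fun y => XopStar n hn ε u j (fun z => pd (dd n hn) u z) y)
        = fun y => -(pd j (fun z => pd (dd n hn) u z) y
              + cf n hn ε u j y * pd (dd n hn) (fun z => pd (dd n hn) u z) y)
            - (if (j : ℕ) = 2*n - 2
                then pd (dd n hn) u y * pd (dd n hn) u y else 0) := by
      funext y; rw [XopStar_eq, Xop_eq]
    rw [h]
    refine ContDiff.sub (ContDiff.neg ?_) ?_
    · exact (contDiff_pd hw2).add
        (((cf_contDiff hn ε hu j).of_le (by norm_num)).mul (contDiff_pd hw2))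
    · split_ifs with hc
      · exact ((contDiff_w hn hu).mul (contDiff_w hn hu)).of_le (by norm_num)
      · exact contDiff_const
  exact hA.mul hStar

lemma claim3 (hn : 1 ≤ n) (ε : ℝ) {u : EuclideanSpace ℝ (Fin (2*n)) → ℝ}
    (hu : ContDiff ℝ 3 u) (x : EuclideanSpace ℝ (Fin (2*n))) :
    pd (dd n hn) (Lop n hn ε u) x
      = ∑ i : Fin (2*n),
          (Xop n hn ε u i (fun y => pd (dd n hn) (Vf n hn ε u i) y) x
            + (if (i : ℕ) = 2*n - 2
                then pd (dd n hn) u x * pd (dd n hn) (Vf n hn ε u i) x else 0)) := by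
  have hV2 : ∀ i : Fin (2*n), ContDiff ℝ 2 (Vf n hn ε u i) := contDiff_V hn ε hu
  have hpdVd : ∀ i : Fin (2*n),
      DifferentiableAt ℝ (fun y => pd (dd n hn) (Vf n hn ε u i) y) x := fun i =>
    ((contDiff_pd (cd11 (hV2 i))).differentiable (by norm_num)).differentiableAt
  have hpdiVd : ∀ i : Fin (2*n),
      DifferentiableAt ℝ (fun y => pd i (Vf n hn ε u i) y) x := fun i =>
    ((contDiff_pd (cd11 (hV2 i))).differentiable (by norm_num)).differentiableAt
  have hcfd : ∀ i : Fin (2*n), DifferentiableAt ℝ (cf n hn ε u i) x := fun i =>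
    ((cf_contDiff hn ε hu i).differentiable (by norm_num)).differentiableAt
  have hXeq : ∀ i : Fin (2*n), (fun y => Xop n hn ε u i (Vf n hn ε u i) y)
      = fun y => pd i (Vf n hn ε u i) y
          + cf n hn ε u i y * pd (dd n hn) (Vf n hn ε u i) y :=
    fun i => funext (fun y => Xop_eq hn ε u (Vf n hn ε u i) i y)
  have hterm : ∀ i : Fin (2*n),
      DifferentiableAt ℝ (fun y => Xop n hn ε u i (Vf n hn ε u i) y) x := by
    intro i
    rw [hXeq i]
    exact (hpdiVd i).add ((hcfd i).mul (hpdVd i))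
  have hL : Lop n hn ε u
      = fun z => ∑ i : Fin (2*n), Xop n hn ε u i (Vf n hn ε u i) z := rfl
  rw [hL, pd_sum (fun i _ => hterm i)]
  refine Finset.sum_congr rfl (fun i _ => ?_)
  rw [hXeq i, pd_add (hpdiVd i) ((hcfd i).fun_mul (hpdVd i)), pd_mul (hcfd i) (hpdVd i),
    pd_comm ((hV2 i).contDiffAt), cf_pd_dd, Xop_eq]
  split_ifs with hi
  · ring
  · ring

end Stmt8

/-- If `u` is `C³`, has bounded intrinsic gradient, and solves `L_ε u = 0` in the
open set `Ω`, then `ω = ∂_{2n}u` satisfies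
`Σ_{i,j} (X^ε_{i,u})^*( (a_{ij}(∇^ε_u u)/√(1+|∇^ε_u u|²)) (X^ε_{j,u})^* ω ) = 0` in `Ω`. -/
theorem stmt8 {n : ℕ} (hn : 1 ≤ n) (ε : ℝ) (hε : 0 < ε)
    (Ω : Set (EuclideanSpace ℝ (Fin (2*n)))) (hΩ : IsOpen Ω)
    (u : EuclideanSpace ℝ (Fin (2*n)) → ℝ) (hu : ContDiff ℝ 3 u)
    (hbd : ∃ M : ℝ, ∀ x ∈ Ω, ∀ i : Fin (2*n), |Xop n hn ε u i u x| ≤ M)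
    (hsol : ∀ x ∈ Ω, Lop n hn ε u x = 0) :
    ∀ x ∈ Ω,
      ∑ i : Fin (2*n), ∑ j : Fin (2*n),
        XopStar n hn ε u i
          (fun y =>
            aCoef (fun k => Xop n hn ε u k u y) i j / Real.sqrt (1 + gradSq n hn ε u u y)
              * XopStar n hn ε u j (fun z => pd ⟨2*n - 1, by omega⟩ u z) y) x = 0 := by
  intro x hx
  open Stmt8 in
  calc ∑ i : Fin (2*n), ∑ j : Fin (2*n),
        XopStar n hn ε u i
          (fun y =>
            aCoef (fun k => Xop n hn ε u k u y) i j / Real.sqrt (1 + gradSq n hn ε u u y)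
              * XopStar n hn ε u j (fun z => pd (Stmt8.dd n hn) u z) y) x
      = ∑ i : Fin (2*n),
          XopStar n hn ε u i
            (fun y => ∑ j : Fin (2*n),
              aCoef (fun k => Xop n hn ε u k u y) i j
                  / Real.sqrt (1 + gradSq n hn ε u u y)
                * XopStar n hn ε u j (fun z => pd (Stmt8.dd n hn) u z) y) x := by
        refine Finset.sum_congr rfl (fun i _ => ?_)
        exact Stmt8.XopStar_sum hn ε u i (fun j =>
          ((Stmt8.contDiff_inner hn ε hu i j).differentiable (by norm_num)).differentiableAt)
    _ = ∑ i : Fin (2*n),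
          XopStar n hn ε u i
            (fun y => -(pd (Stmt8.dd n hn) (Stmt8.Vf n hn ε u i) y)) x := by
        refine Finset.sum_congr rfl (fun i _ => ?_)
        have h : (fun y => ∑ j : Fin (2*n),
              aCoef (fun k => Xop n hn ε u k u y) i j
                  / Real.sqrt (1 + gradSq n hn ε u u y)
                * XopStar n hn ε u j (fun z => pd (Stmt8.dd n hn) u z) y)
            = fun y => -(pd (Stmt8.dd n hn) (Stmt8.Vf n hn ε u i) y) :=
          funext (fun y => Stmt8.claim1 hn ε hu i y)
        rw [h]
    _ = ∑ i : Fin (2*n),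
          (Xop n hn ε u i (fun y => pd (Stmt8.dd n hn) (Stmt8.Vf n hn ε u i) y) x
            + (if (i : ℕ) = 2*n - 2
                then pd (Stmt8.dd n hn) u x
                  * pd (Stmt8.dd n hn) (Stmt8.Vf n hn ε u i) x else 0)) := by
        refine Finset.sum_congr rfl (fun i _ => ?_)
        rw [Stmt8.XopStar_eq, Stmt8.Xop_neg]
        split_ifs with hi
        · ring
        · ring
    _ = pd (Stmt8.dd n hn) (Lop n hn ε u) x := (Stmt8.claim3 hn ε hu x).symm
    _ = 0 := by
        have hev : Lop n hn ε u =ᶠ[nhds x] (fun _ => (0:ℝ)) := by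
          filter_upwards [hΩ.mem_nhds hx] with y hy using hsol y hy
        rw [pd_congr_nhds hev, pd_const]
end

section
/- Let u : R^{2n} → R be C^3 with |∇^ε_u u| bounded, and suppose u solves L_ε u = 0 in Ω, where L_ε u = Σ_{i=1}^{2n} X^ε_{i,u}(X^ε_{i,u}u/√(1+|∇^ε_u u|²)). Then for each k ≤ 2n-1, the function z = X^ε_{k,u}u satisfies Σ_{i,j} X^ε_{i,u}( (a_{ij}(∇^ε_u u)/√(1+|∇^ε_u u|²)) X^ε_{j,u} z ) = -Σ_i [X^ε_{k,u}, X^ε_{i,u}]( X^ε_{i,u}u/√(1+|∇^ε_u u|²) ) - Σ_{i,j} X^ε_{i,u}( (a_{ij}(∇^ε_u u)/√(1+|∇^ε_u u|²)) [X^ε_{k,u}, X^ε_{j,u}]u ) pointwise in Ω. -/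
open scoped BigOperators

noncomputable def Xvec (n : ℕ) (hn : 1 ≤ n) (ε : ℝ)
    (u : EuclideanSpace ℝ (Fin (2*n)) → ℝ) (i : Fin (2*n))
    (x : EuclideanSpace ℝ (Fin (2*n))) : EuclideanSpace ℝ (Fin (2*n)) :=
  if (i : ℕ) < n - 1 then EuclideanSpace.single i 1
  else if (i : ℕ) < 2*n - 2 then
    EuclideanSpace.single i 1
      - x ⟨(i : ℕ) - (n - 1), by have := i.isLt; omega⟩ • EuclideanSpace.single ⟨2*n - 1, by omega⟩ (1:ℝ)
  else if (i : ℕ) = 2*n - 2 then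
    EuclideanSpace.single i 1 + u x • EuclideanSpace.single ⟨2*n - 1, by omega⟩ (1:ℝ)
  else ε • EuclideanSpace.single ⟨2*n - 1, by omega⟩ (1:ℝ)

lemma Xop_eq (n : ℕ) (hn : 1 ≤ n) (ε : ℝ) (u : EuclideanSpace ℝ (Fin (2*n)) → ℝ)
    (i : Fin (2*n)) (f : EuclideanSpace ℝ (Fin (2*n)) → ℝ) (x : EuclideanSpace ℝ (Fin (2*n))) :
    Xop n hn ε u i f x = fderiv ℝ f x (Xvec n hn ε u i x) := by
  unfold Xop Xvec pd
  split_ifs with h1 h2 h3 <;> simp [smul_eq_mul]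

section Rules

variable {n : ℕ} {hn : 1 ≤ n} {ε : ℝ} {u : EuclideanSpace ℝ (Fin (2*n)) → ℝ}
variable {f g : EuclideanSpace ℝ (Fin (2*n)) → ℝ} {x : EuclideanSpace ℝ (Fin (2*n))}
variable {i : Fin (2*n)}

lemma Xop_congr (h : ∀ y, f y = g y) : Xop n hn ε u i f x = Xop n hn ε u i g x := by
  rw [show f = g from funext h]

lemma Xop_const (c : ℝ) : Xop n hn ε u i (fun _ => c) x = 0 := by
  rw [Xop_eq, fderiv_fun_const]; simp

lemma Xop_add (hf : DifferentiableAt ℝ f x) (hg : DifferentiableAt ℝ g x) :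
    Xop n hn ε u i (fun y => f y + g y) x = Xop n hn ε u i f x + Xop n hn ε u i g x := by
  simp only [Xop_eq]; rw [fderiv_fun_add hf hg]; simp

lemma Xop_sum {ι : Type*} (s : Finset ι) (F : ι → EuclideanSpace ℝ (Fin (2*n)) → ℝ)
    (h : ∀ j ∈ s, DifferentiableAt ℝ (F j) x) :
    Xop n hn ε u i (fun y => ∑ j ∈ s, F j y) x = ∑ j ∈ s, Xop n hn ε u i (F j) x := by
  simp only [Xop_eq]; rw [fderiv_fun_sum h]; simp

lemma Xop_mul (hf : DifferentiableAt ℝ f x) (hg : DifferentiableAt ℝ g x) :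
    Xop n hn ε u i (fun y => f y * g y) x = f x * Xop n hn ε u i g x + g x * Xop n hn ε u i f x := by
  simp only [Xop_eq]; rw [fderiv_fun_mul hf hg]; simp

lemma Xop_div (hf : DifferentiableAt ℝ f x) (hg : DifferentiableAt ℝ g x) (hx : g x ≠ 0) :
    Xop n hn ε u i (fun y => f y / g y) x
      = (Xop n hn ε u i f x * g x - f x * Xop n hn ε u i g x) / (g x) ^ 2 := by
  have hinv : HasFDerivAt (fun y => (g y)⁻¹) ((-(g x ^ 2)⁻¹) • fderiv ℝ g x) x :=
    (hasDerivAt_inv hx).comp_hasFDerivAt x hg.hasFDerivAt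
  have h1 : Xop n hn ε u i (fun y => f y / g y) x
      = Xop n hn ε u i (fun y => f y * (g y)⁻¹) x := by
    apply Xop_congr; intro y; rw [div_eq_mul_inv]
  rw [h1, Xop_mul hf hinv.differentiableAt]
  have h2 : Xop n hn ε u i (fun y => (g y)⁻¹) x = -(Xop n hn ε u i g x) / (g x) ^ 2 := by
    simp only [Xop_eq]; rw [hinv.fderiv]; simp [smul_eq_mul]; ring
  rw [h2, Xop_eq]
  field_simp
  ring

lemma Xop_sqrt (hg : DifferentiableAt ℝ g x) (hx : g x ≠ 0) :
    Xop n hn ε u i (fun y => Real.sqrt (g y)) x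
      = Xop n hn ε u i g x / (2 * Real.sqrt (g x)) := by
  simp only [Xop_eq]; rw [fderiv_sqrt hg hx]; simp [smul_eq_mul]; ring

end Rules


section Smooth

variable {n : ℕ} {hn : 1 ≤ n} {ε : ℝ} {u : EuclideanSpace ℝ (Fin (2*n)) → ℝ}

lemma contDiff_Xvec (hu : ContDiff ℝ 2 u) (i : Fin (2*n)) :
    ContDiff ℝ 2 (Xvec n hn ε u i) := by
  unfold Xvec
  split_ifs with h1 h2 h3
  · exact contDiff_const
  · exact contDiff_const.sub
      (ContDiff.fun_smul (by exact ((EuclideanSpace.proj (𝕜 := ℝ) (⟨(i : ℕ) - (n - 1), by have := i.isLt; omega⟩ : Fin (2*n)) : EuclideanSpace ℝ (Fin (2*n)) →L[ℝ] ℝ)).contDiff)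
        contDiff_const)
  · exact contDiff_const.add (hu.fun_smul contDiff_const)
  · exact contDiff_const

lemma contDiff_Xop {m : ℕ} (hu : ContDiff ℝ 2 u) (hm : m ≤ 2)
    {f : EuclideanSpace ℝ (Fin (2*n)) → ℝ} (hf : ContDiff ℝ (m + 1) f) (i : Fin (2*n)) :
    ContDiff ℝ m (fun y => Xop n hn ε u i f y) := by
  have hfun : (fun y => Xop n hn ε u i f y)
      = fun y => fderiv ℝ f y (Xvec n hn ε u i y) := funext fun y => Xop_eq n hn ε u i f y
  rw [hfun]
  have h1 : ContDiff ℝ m (fderiv ℝ f) := hf.fderiv_right (by exact_mod_cast le_refl (m+1))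
  exact h1.clm_apply ((contDiff_Xvec hu i).of_le (by exact_mod_cast hm))

lemma contDiff_Xop_u (hu : ContDiff ℝ 3 u) (i : Fin (2*n)) :
    ContDiff ℝ 2 (fun y => Xop n hn ε u i u y) :=
  contDiff_Xop (hu.of_le (by norm_num)) le_rfl (by exact_mod_cast hu) i

lemma contDiff_gradSq (hu : ContDiff ℝ 3 u) :
    ContDiff ℝ 2 (gradSq n hn ε u u) := by
  unfold gradSq
  exact ContDiff.sum fun i _ => (contDiff_Xop_u hu i).pow 2

lemma Q_pos (y : EuclideanSpace ℝ (Fin (2*n))) : 0 < 1 + gradSq n hn ε u u y := by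
  have : 0 ≤ gradSq n hn ε u u y :=
    Finset.sum_nonneg fun _ _ => sq_nonneg _
  linarith

lemma W_pos (y : EuclideanSpace ℝ (Fin (2*n))) :
    0 < Real.sqrt (1 + gradSq n hn ε u u y) := Real.sqrt_pos.mpr (Q_pos y)

lemma W_sq (y : EuclideanSpace ℝ (Fin (2*n))) :
    Real.sqrt (1 + gradSq n hn ε u u y) ^ 2 = 1 + gradSq n hn ε u u y :=
  Real.sq_sqrt (Q_pos y).le

lemma contDiff_W (hu : ContDiff ℝ 3 u) :
    ContDiff ℝ 2 (fun y => Real.sqrt (1 + gradSq n hn ε u u y)) :=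
  (contDiff_const.add (contDiff_gradSq hu)).sqrt fun y => (Q_pos y).ne'

end Smooth


section Key

variable {n : ℕ} {hn : 1 ≤ n} {ε : ℝ} {u : EuclideanSpace ℝ (Fin (2*n)) → ℝ}

lemma Xop_W (hu : ContDiff ℝ 3 u) (k : Fin (2*n)) (y : EuclideanSpace ℝ (Fin (2*n))) :
    Xop n hn ε u k (fun w => Real.sqrt (1 + gradSq n hn ε u u w)) y
      = (∑ j : Fin (2*n), Xop n hn ε u j u y * Xop n hn ε u k (fun w => Xop n hn ε u j u w) y)
        / Real.sqrt (1 + gradSq n hn ε u u y) := by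
  have hXd : ∀ j : Fin (2*n), DifferentiableAt ℝ (fun w => Xop n hn ε u j u w) y :=
    fun j => ((contDiff_Xop_u hu j).differentiable (by norm_num)) y
  have hQd : DifferentiableAt ℝ (fun w => 1 + gradSq n hn ε u u w) y :=
    ((contDiff_const.add (contDiff_gradSq hu)).differentiable (by norm_num)) y
  rw [Xop_sqrt hQd (Q_pos y).ne']
  have h1 : Xop n hn ε u k (fun w => 1 + gradSq n hn ε u u w) y
      = Xop n hn ε u k (fun w => (1:ℝ) + ∑ j : Fin (2*n),
          (fun q => Xop n hn ε u q u w * Xop n hn ε u q u w) j) y := by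
    apply Xop_congr; intro w; simp only [gradSq, pow_two]
  rw [h1, Xop_add (differentiableAt_const 1)
      (by
        apply DifferentiableAt.fun_sum
        intro j _
        exact (hXd j).mul (hXd j)),
    Xop_const,
    Xop_sum Finset.univ (fun j w => Xop n hn ε u j u w * Xop n hn ε u j u w) (fun j _ => (hXd j).mul (hXd j))]
  have h2 : ∀ j : Fin (2*n),
      Xop n hn ε u k (fun w => Xop n hn ε u j u w * Xop n hn ε u j u w) y
        = 2 * (Xop n hn ε u j u y * Xop n hn ε u k (fun w => Xop n hn ε u j u w) y) := by
    intro j; rw [Xop_mul (hXd j) (hXd j)]; ring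
  rw [Finset.sum_congr rfl fun j _ => h2 j, ← Finset.mul_sum]
  have hW := (W_pos (n := n) (hn := hn) (ε := ε) (u := u) y).ne'
  field_simp
  ring

lemma keyV (hu : ContDiff ℝ 3 u) (i k : Fin (2*n)) (y : EuclideanSpace ℝ (Fin (2*n))) :
    Xop n hn ε u k (fun w => Xop n hn ε u i u w / Real.sqrt (1 + gradSq n hn ε u u w)) y
      = ∑ j : Fin (2*n),
          aCoef (fun l => Xop n hn ε u l u y) i j / Real.sqrt (1 + gradSq n hn ε u u y)
            * Xop n hn ε u k (fun w => Xop n hn ε u j u w) y := by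
  have hXd : ∀ j : Fin (2*n), DifferentiableAt ℝ (fun w => Xop n hn ε u j u w) y :=
    fun j => ((contDiff_Xop_u hu j).differentiable (by norm_num)) y
  have hWd : DifferentiableAt ℝ (fun w => Real.sqrt (1 + gradSq n hn ε u u w)) y :=
    ((contDiff_W hu).differentiable (by norm_num)) y
  rw [Xop_div (hXd i) hWd (W_pos y).ne', Xop_W hu k y]
  have hterm : ∀ j : Fin (2*n),
      aCoef (fun l => Xop n hn ε u l u y) i j / Real.sqrt (1 + gradSq n hn ε u u y)
          * Xop n hn ε u k (fun w => Xop n hn ε u j u w) y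
        = (if i = j then
            Xop n hn ε u k (fun w => Xop n hn ε u j u w) y
              / Real.sqrt (1 + gradSq n hn ε u u y) else 0)
          - Xop n hn ε u i u y
              / ((1 + gradSq n hn ε u u y) * Real.sqrt (1 + gradSq n hn ε u u y))
              * (Xop n hn ε u j u y * Xop n hn ε u k (fun w => Xop n hn ε u j u w) y) := by
    intro j
    have hQ := (Q_pos (n := n) (hn := hn) (ε := ε) (u := u) y).ne'
    have hW := (W_pos (n := n) (hn := hn) (ε := ε) (u := u) y).ne'
    unfold aCoef gradSq
    unfold gradSq at hQ hW
    split_ifs with h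
    · field_simp
    · field_simp
      ring
  rw [Finset.sum_congr rfl fun j _ => hterm j, Finset.sum_sub_distrib, Finset.sum_ite_eq,
    ← Finset.mul_sum]
  simp only [Finset.mem_univ, if_true]
  have hW2 := W_sq (n := n) (hn := hn) (ε := ε) (u := u) y
  have hW := (W_pos (n := n) (hn := hn) (ε := ε) (u := u) y).ne'
  set Wy := Real.sqrt (1 + gradSq n hn ε u u y) with hWy
  rw [← hW2]
  field_simp

end Key

section Coef

variable {n : ℕ} {hn : 1 ≤ n} {ε : ℝ} {u : EuclideanSpace ℝ (Fin (2*n)) → ℝ}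

lemma contDiff_coef (hu : ContDiff ℝ 3 u) (i j : Fin (2*n)) :
    ContDiff ℝ 1 (fun y =>
      aCoef (fun l => Xop n hn ε u l u y) i j / Real.sqrt (1 + gradSq n hn ε u u y)) := by
  have h1 : (fun y =>
      aCoef (fun l => Xop n hn ε u l u y) i j / Real.sqrt (1 + gradSq n hn ε u u y))
      = fun y => ((if i = j then (1:ℝ) else 0)
          - Xop n hn ε u i u y * Xop n hn ε u j u y / (1 + gradSq n hn ε u u y))
          / Real.sqrt (1 + gradSq n hn ε u u y) := by
    funext y; unfold aCoef gradSq; rfl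
  rw [h1]
  have hnum : ContDiff ℝ 2 (fun y => (if i = j then (1:ℝ) else 0)
      - Xop n hn ε u i u y * Xop n hn ε u j u y / (1 + gradSq n hn ε u u y)) :=
    contDiff_const.sub (((contDiff_Xop_u hu i).mul (contDiff_Xop_u hu j)).div
      (contDiff_const.add (contDiff_gradSq hu)) fun y => (Q_pos y).ne')
  exact ((hnum.div (contDiff_W hu) fun y => (W_pos y).ne').of_le (by norm_num))

lemma contDiff_XX (hu : ContDiff ℝ 3 u) (i j : Fin (2*n)) :
    ContDiff ℝ 1 (fun y => Xop n hn ε u i (fun w => Xop n hn ε u j u w) y) :=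
  contDiff_Xop (hu.of_le (by norm_num)) (by norm_num)
    (by exact_mod_cast contDiff_Xop_u hu j) i

lemma contDiff_v (hu : ContDiff ℝ 3 u) (i : Fin (2*n)) :
    ContDiff ℝ 2 (fun y => Xop n hn ε u i u y / Real.sqrt (1 + gradSq n hn ε u u y)) :=
  (contDiff_Xop_u hu i).div (contDiff_W hu) fun y => (W_pos y).ne'

lemma contDiff_Xv (hu : ContDiff ℝ 3 u) (i j : Fin (2*n)) :
    ContDiff ℝ 1 (fun y => Xop n hn ε u i
      (fun w => Xop n hn ε u j u w / Real.sqrt (1 + gradSq n hn ε u u w)) y) :=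
  contDiff_Xop (hu.of_le (by norm_num)) (by norm_num)
    (by exact_mod_cast contDiff_v hu j) i

end Coef


/-- If `u` is `C³` with bounded intrinsic gradient and solves `L_ε u = 0` in `Ω`,
then for `k ≤ 2n-1` (1-based), `z = X^ε_{k,u}u` solves
`Σ_{i,j} X^ε_{i,u}( (a_{ij}(∇^ε_u u)/√(1+|∇^ε_u u|²)) X^ε_{j,u} z )
  = -Σ_i [X^ε_{k,u},X^ε_{i,u}]( X^ε_{i,u}u/√(1+|∇^ε_u u|²) )
    -Σ_{i,j} X^ε_{i,u}( (a_{ij}(∇^ε_u u)/√(1+|∇^ε_u u|²)) [X^ε_{k,u},X^ε_{j,u}]u )` in `Ω`. -/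
theorem stmt11 {n : ℕ} (hn : 1 ≤ n) (ε : ℝ) (hε : 0 < ε)
    (Ω : Set (EuclideanSpace ℝ (Fin (2*n)))) (hΩ : IsOpen Ω)
    (u : EuclideanSpace ℝ (Fin (2*n)) → ℝ) (hu : ContDiff ℝ 3 u)
    (hbd : ∃ M : ℝ, ∀ x, ∀ i : Fin (2*n), |Xop n hn ε u i u x| ≤ M)
    (hsol : ∀ x ∈ Ω, Lop n hn ε u x = 0)
    (k : Fin (2*n)) (hk : (k : ℕ) < 2*n - 1) :
    ∀ x ∈ Ω,
      ∑ i : Fin (2*n), ∑ j : Fin (2*n),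
        Xop n hn ε u i
          (fun y =>
            aCoef (fun l => Xop n hn ε u l u y) i j / Real.sqrt (1 + gradSq n hn ε u u y)
              * Xop n hn ε u j (fun w => Xop n hn ε u k u w) y) x
      = - (∑ i : Fin (2*n),
            (Xop n hn ε u k
              (fun y => Xop n hn ε u i
                (fun w => Xop n hn ε u i u w / Real.sqrt (1 + gradSq n hn ε u u w)) y) x
            - Xop n hn ε u i
              (fun y => Xop n hn ε u k
                (fun w => Xop n hn ε u i u w / Real.sqrt (1 + gradSq n hn ε u u w)) y) x))
        - ∑ i : Fin (2*n), ∑ j : Fin (2*n),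
            Xop n hn ε u i
              (fun y =>
                aCoef (fun l => Xop n hn ε u l u y) i j
                  / Real.sqrt (1 + gradSq n hn ε u u y)
                  * (Xop n hn ε u k (fun w => Xop n hn ε u j u w) y
                      - Xop n hn ε u j (fun w => Xop n hn ε u k u w) y)) x := by
  intro x hx
  have hcoef : ∀ i j : Fin (2*n), DifferentiableAt ℝ
      (fun y => aCoef (fun l => Xop n hn ε u l u y) i j
        / Real.sqrt (1 + gradSq n hn ε u u y)) x :=
    fun i j => ((contDiff_coef hu i j).differentiable one_ne_zero) x
  have hXX : ∀ i j : Fin (2*n), DifferentiableAt ℝ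
      (fun y => Xop n hn ε u i (fun w => Xop n hn ε u j u w) y) x :=
    fun i j => ((contDiff_XX hu i j).differentiable one_ne_zero) x
  have hXv : ∀ i j : Fin (2*n), DifferentiableAt ℝ
      (fun y => Xop n hn ε u i
        (fun w => Xop n hn ε u j u w / Real.sqrt (1 + gradSq n hn ε u u w)) y) x :=
    fun i j => ((contDiff_Xv hu i j).differentiable one_ne_zero) x
  have hdiff1 : ∀ i j : Fin (2*n), DifferentiableAt ℝ
      (fun y => aCoef (fun l => Xop n hn ε u l u y) i j / Real.sqrt (1 + gradSq n hn ε u u y)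
        * Xop n hn ε u j (fun w => Xop n hn ε u k u w) y) x :=
    fun i j => (hcoef i j).mul (hXX j k)
  have hdiff2 : ∀ i j : Fin (2*n), DifferentiableAt ℝ
      (fun y => aCoef (fun l => Xop n hn ε u l u y) i j / Real.sqrt (1 + gradSq n hn ε u u y)
        * (Xop n hn ε u k (fun w => Xop n hn ε u j u w) y
            - Xop n hn ε u j (fun w => Xop n hn ε u k u w) y)) x :=
    fun i j => (hcoef i j).mul ((hXX k j).sub (hXX j k))
  -- Step 1: combine LHS and the second commutator sum
  have key1 : ∀ i : Fin (2*n),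
      (∑ j : Fin (2*n), Xop n hn ε u i
          (fun y => aCoef (fun l => Xop n hn ε u l u y) i j
            / Real.sqrt (1 + gradSq n hn ε u u y)
            * Xop n hn ε u j (fun w => Xop n hn ε u k u w) y) x)
      + (∑ j : Fin (2*n), Xop n hn ε u i
          (fun y => aCoef (fun l => Xop n hn ε u l u y) i j
            / Real.sqrt (1 + gradSq n hn ε u u y)
            * (Xop n hn ε u k (fun w => Xop n hn ε u j u w) y
                - Xop n hn ε u j (fun w => Xop n hn ε u k u w) y)) x)
      = Xop n hn ε u i
          (fun y => Xop n hn ε u k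
            (fun w => Xop n hn ε u i u w / Real.sqrt (1 + gradSq n hn ε u u w)) y) x := by
    intro i
    rw [← Finset.sum_add_distrib]
    have hstep : ∀ j ∈ (Finset.univ : Finset (Fin (2*n))),
        Xop n hn ε u i
          (fun y => aCoef (fun l => Xop n hn ε u l u y) i j
            / Real.sqrt (1 + gradSq n hn ε u u y)
            * Xop n hn ε u j (fun w => Xop n hn ε u k u w) y) x
        + Xop n hn ε u i
          (fun y => aCoef (fun l => Xop n hn ε u l u y) i j
            / Real.sqrt (1 + gradSq n hn ε u u y)
            * (Xop n hn ε u k (fun w => Xop n hn ε u j u w) y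
                - Xop n hn ε u j (fun w => Xop n hn ε u k u w) y)) x
        = Xop n hn ε u i
          (fun y => aCoef (fun l => Xop n hn ε u l u y) i j
              / Real.sqrt (1 + gradSq n hn ε u u y)
              * Xop n hn ε u j (fun w => Xop n hn ε u k u w) y
            + aCoef (fun l => Xop n hn ε u l u y) i j
              / Real.sqrt (1 + gradSq n hn ε u u y)
              * (Xop n hn ε u k (fun w => Xop n hn ε u j u w) y
                  - Xop n hn ε u j (fun w => Xop n hn ε u k u w) y)) x :=
      fun j _ => (Xop_add (hdiff1 i j) (hdiff2 i j)).symm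
    rw [Finset.sum_congr rfl hstep,
      ← Xop_sum Finset.univ (fun j y => aCoef (fun l => Xop n hn ε u l u y) i j
              / Real.sqrt (1 + gradSq n hn ε u u y)
              * Xop n hn ε u j (fun w => Xop n hn ε u k u w) y
            + aCoef (fun l => Xop n hn ε u l u y) i j
              / Real.sqrt (1 + gradSq n hn ε u u y)
              * (Xop n hn ε u k (fun w => Xop n hn ε u j u w) y
                  - Xop n hn ε u j (fun w => Xop n hn ε u k u w) y))
        (fun j _ => ((hdiff1 i j).add (hdiff2 i j)))]
    apply Xop_congr
    intro y
    rw [keyV hu i k y]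
    apply Finset.sum_congr rfl
    intro j _
    ring
  -- Step 2: the solution equation kills the first part of the first commutator sum
  have key2 : ∑ i : Fin (2*n),
      Xop n hn ε u k
        (fun y => Xop n hn ε u i
          (fun w => Xop n hn ε u i u w / Real.sqrt (1 + gradSq n hn ε u u w)) y) x = 0 := by
    rw [← Xop_sum Finset.univ _ (fun i _ => hXv i i)]
    have hLop : Xop n hn ε u k
        (fun y => ∑ i : Fin (2*n), Xop n hn ε u i
          (fun w => Xop n hn ε u i u w / Real.sqrt (1 + gradSq n hn ε u u w)) y) x
        = Xop n hn ε u k (Lop n hn ε u) x := by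
      apply Xop_congr; intro y; rfl
    rw [hLop, Xop_eq]
    have hev : Lop n hn ε u =ᶠ[nhds x] fun _ => (0:ℝ) := by
      filter_upwards [hΩ.mem_nhds hx] with y hy using hsol y hy
    rw [hev.fderiv_eq]
    simp
  have hsum1 := Finset.sum_congr rfl fun i (_ : i ∈ (Finset.univ : Finset (Fin (2*n)))) => key1 i
  rw [Finset.sum_add_distrib] at hsum1
  rw [Finset.sum_sub_distrib, key2]
  linarith [hsum1]
end
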